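/- The graph Δ_t(n,k−1) is connected if and only if the subgraph Λ̃_t(n,k) of Λ_t(n,k) induced on the non-isolated codes C_t(n,k) \ I_t(n,k) is connected (with the convention that the empty graph is connected). In particular, Λ_t(n,k) is the disjoint union of Λ̃_t(n,k) and the set I_t(n,k) of isolated vertices. -/

import Mathlib

open Finset

variable (F : Type) [Field F] [Fintype F] [DecidableEq F]

/-- The dual code of a linear code `C ⊆ F^n`, with respect to the standard bilinear form. -/
def dualCode (n : ℕ) (C : Submodule F (Fin n → F)) : Submodule F (Fin n → F) where
  carrier := {v | ∀ c ∈ C, ∑ i, v i * c i = 0}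
  zero_mem' := by intro c _; simp
  add_mem' := by
    intro a b ha hb c hc
    simp only [Set.mem_setOf_eq] at *
    simp [add_mul, Finset.sum_add_distrib, ha c hc, hb c hc]
  smul_mem' := by
    intro r a ha c hc
    simp only [Set.mem_setOf_eq] at *
    simp [smul_eq_mul, mul_assoc, ← Finset.mul_sum, ha c hc]

/-- `goodCode F n t k C` says that `C` is an `[n,k]`-linear code over `F` whose dual minimum
distance is at least `t+1`, i.e. `C ∈ C_t(n,k)`. -/
def goodCode (n t k : ℕ) (C : Submodule F (Fin n → F)) : Prop :=
  Module.finrank F C = k ∧ ∀ v ∈ dualCode F n C, v ≠ 0 → t + 1 ≤ hammingNorm v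

/-- The Grassmann graph `Δ_t(n,k)` of codes in `C_t(n,k)`: two codes are adjacent iff
their intersection has dimension `k-1`. -/
def deltaGraph (n t k : ℕ) : SimpleGraph {C : Submodule F (Fin n → F) // goodCode F n t k C} where
  Adj X Y := X ≠ Y ∧ Module.finrank F ↥(X.1 ⊓ Y.1) = k - 1
  symm := by
    constructor
    rintro X Y ⟨h1, h2⟩
    exact ⟨h1.symm, by rwa [inf_comm]⟩
  loopless := by constructor; rintro X ⟨h1, _⟩; exact h1 rfl

/-- The graph `Λ_t(n,k)` of codes in `C_t(n,k)`: two codes are adjacent iff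
their intersection belongs to `C_t(n,k-1)`. -/
def lambdaGraph (n t k : ℕ) : SimpleGraph {C : Submodule F (Fin n → F) // goodCode F n t k C} where
  Adj X Y := X ≠ Y ∧ goodCode F n t (k-1) (X.1 ⊓ Y.1)
  symm := by
    constructor
    rintro X Y ⟨h1, h2⟩
    exact ⟨h1.symm, by rwa [inf_comm]⟩
  loopless := by constructor; rintro X ⟨h1, _⟩; exact h1 rfl

/-- A code `C ∈ C_t(n,k)` is isolated if no `(k-1)`-dimensional subspace of `C`
belongs to `C_t(n,k-1)`. -/
def IsIsolated (n t k : ℕ) (C : Submodule F (Fin n → F)) : Prop :=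
  ∀ D : Submodule F (Fin n → F), D ≤ C → ¬ goodCode F n t (k-1) D

/-- A monomial transformation of `F^n`: a permutation of the coordinates composed with
multiplication of each coordinate by a nonzero scalar. -/
def IsMonomial (n : ℕ) (ρ : (Fin n → F) ≃ₗ[F] (Fin n → F)) : Prop :=
  ∃ (σ : Equiv.Perm (Fin n)) (d : Fin n → F),
    (∀ i, d i ≠ 0) ∧ ∀ (v : Fin n → F) (i : Fin n), ρ v i = d i * v (σ i)

/-- `S_s(Ω)`: the set of points (`1`-dimensional subspaces) of `PG(k-1,q)` lying on a subspace
spanned by `s+1` points of `Ω`. (We represent any subspace by the corresponding submodule of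
`F^k`, and points of `PG(k-1,q)` by `1`-dimensional submodules.) -/
def satPoints (k s : ℕ) (Ω : Set (Submodule F (Fin k → F))) : Set (Submodule F (Fin k → F)) :=
  {P | ∃ T : Finset (Submodule F (Fin k → F)), ↑T ⊆ Ω ∧ T.card = s + 1 ∧ P ≤ T.sup id}

/-- A set `Ω` of points of `PG(k-1,q)` is `s`-saturating if `S_s(Ω)` is the whole point set of
`PG(k-1,q)` while (for `s ≥ 1`) `S_{s-1}(Ω)` is not. -/
def IsSaturating (k s : ℕ) (Ω : Set (Submodule F (Fin k → F))) : Prop :=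
  (∀ P : Submodule F (Fin k → F), Module.finrank F P = 1 → P ∈ satPoints F k s Ω) ∧
  (1 ≤ s → ¬ ∀ P : Submodule F (Fin k → F), Module.finrank F P = 1 → P ∈ satPoints F k (s-1) Ω)

section Aux

variable {F}

lemma dualCode_antitone {n : ℕ} {C D : Submodule F (Fin n → F)} (h : C ≤ D) :
    dualCode F n D ≤ dualCode F n C := fun v hv c hc => hv c (h hc)

lemma goodCode_of_le {n t m m' : ℕ} {A X : Submodule F (Fin n → F)}
    (hA : goodCode F n t m A) (hle : A ≤ X) (hX : Module.finrank F X = m') :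
    goodCode F n t m' X :=
  ⟨hX, fun v hv hv0 => hA.2 v (dualCode_antitone hle hv) hv0⟩

/-- Two good `(k-1)`-codes inside a good `k`-code are equal or adjacent in `Δ`. -/
lemma delta_reach_of_le {n t k : ℕ}
    {X : Submodule F (Fin n → F)} (hX : goodCode F n t k X)
    (A B : {C : Submodule F (Fin n → F) // goodCode F n t (k-1) C})
    (hA : A.1 ≤ X) (hB : B.1 ≤ X) :
    (deltaGraph F n t (k-1)).Reachable A B := by
  by_cases hAB : A = B
  · subst hAB; rfl
  · refine SimpleGraph.Adj.reachable ⟨hAB, ?_⟩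
    have h1 := Submodule.finrank_sup_add_finrank_inf_eq A.1 B.1
    have hsup_le : Module.finrank F ↥(A.1 ⊔ B.1) ≤ k := by
      have h := Submodule.finrank_mono (M := Fin n → F) (sup_le hA hB)
      rwa [hX.1] at h
    have hA_le : k - 1 ≤ Module.finrank F ↥(A.1 ⊔ B.1) := by
      have h := Submodule.finrank_mono (M := Fin n → F) (le_sup_left : A.1 ≤ A.1 ⊔ B.1)
      rwa [A.2.1] at h
    have hne : Module.finrank F ↥(A.1 ⊔ B.1) ≠ k - 1 := by
      intro h
      have hA' : A.1 = A.1 ⊔ B.1 :=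
        Submodule.eq_of_le_of_finrank_eq le_sup_left (by rw [A.2.1, h])
      have hB' : B.1 = A.1 ⊔ B.1 :=
        Submodule.eq_of_le_of_finrank_eq le_sup_right (by rw [B.2.1, h])
      exact hAB (Subtype.ext (hA'.trans hB'.symm))
    rw [A.2.1, B.2.1] at h1
    omega

/-- Two good `k`-codes containing a common good `(k-1)`-code are equal or adjacent in `Λ`. -/
lemma lambda_eq_or_adj {n t k : ℕ}
    (X Y : {C : Submodule F (Fin n → F) // goodCode F n t k C})
    {D : Submodule F (Fin n → F)} (hD : goodCode F n t (k-1) D)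
    (hDX : D ≤ X.1) (hDY : D ≤ Y.1) :
    X = Y ∨ (lambdaGraph F n t k).Adj X Y := by
  by_cases hXY : X = Y
  · exact Or.inl hXY
  · refine Or.inr ⟨hXY, ?_⟩
    have hDle : D ≤ X.1 ⊓ Y.1 := le_inf hDX hDY
    have hge : k - 1 ≤ Module.finrank F ↥(X.1 ⊓ Y.1) := by
      have h := Submodule.finrank_mono (M := Fin n → F) hDle
      rwa [hD.1] at h
    have hle : Module.finrank F ↥(X.1 ⊓ Y.1) ≤ k := by
      have h := Submodule.finrank_mono (M := Fin n → F) (inf_le_left : X.1 ⊓ Y.1 ≤ X.1)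
      rwa [X.2.1] at h
    have hne : Module.finrank F ↥(X.1 ⊓ Y.1) ≠ k := by
      intro h
      have hX' : X.1 ⊓ Y.1 = X.1 :=
        Submodule.eq_of_le_of_finrank_eq inf_le_left (by rw [h, X.2.1])
      have hY' : X.1 ⊓ Y.1 = Y.1 :=
        Submodule.eq_of_le_of_finrank_eq inf_le_right (by rw [h, Y.2.1])
      exact hXY (Subtype.ext (hX'.symm.trans hY'))
    have hk1 : 0 < k := by
      rcases Nat.eq_zero_or_pos k with h0 | h; · omega
      · exact h
    have heq : Module.finrank F ↥(X.1 ⊓ Y.1) = k - 1 := by omega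
    have : X.1 ⊓ Y.1 = D :=
      (Submodule.eq_of_le_of_finrank_eq hDle (by rw [hD.1, heq])).symm
    rwa [this]

/-- The sum of two `Δ`-adjacent good `(k-1)`-codes is a good `k`-code. -/
lemma sup_good {n t k : ℕ}
    {A B : {C : Submodule F (Fin n → F) // goodCode F n t (k-1) C}}
    (h : (deltaGraph F n t (k-1)).Adj A B) : goodCode F n t k (A.1 ⊔ B.1) := by
  obtain ⟨hne, hinf⟩ := h
  have hk2 : 2 ≤ k := by
    by_contra hlt
    have h0 : k - 1 = 0 := by omega
    have hA0 : A.1 = ⊥ := Submodule.finrank_eq_zero.mp (by rw [A.2.1, h0])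
    have hB0 : B.1 = ⊥ := Submodule.finrank_eq_zero.mp (by rw [B.2.1, h0])
    exact hne (Subtype.ext (hA0.trans hB0.symm))
  have h1 := Submodule.finrank_sup_add_finrank_inf_eq A.1 B.1
  rw [A.2.1, B.2.1, hinf] at h1
  refine goodCode_of_le A.2 le_sup_left ?_
  omega

/-- Any good `(k-1)`-code extends to a good `k`-code when `k < n`. -/
lemma exists_good_ext {n t k : ℕ} (hk : 0 < k) (hkn : k < n)
    {A : Submodule F (Fin n → F)} (hA : goodCode F n t (k-1) A) :
    ∃ X : Submodule F (Fin n → F), goodCode F n t k X ∧ A ≤ X := by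
  have hAne : A ≠ ⊤ := by
    intro h
    have := hA.1
    rw [h, finrank_top, Module.finrank_fin_fun] at this
    omega
  have hex : ∃ v, v ∉ A := by
    by_contra h
    push_neg at h
    exact hAne (eq_top_iff.mpr fun x _ => h x)
  obtain ⟨v, hv⟩ := hex
  have hv0 : v ≠ 0 := fun h => hv (h ▸ A.zero_mem)
  have hinf : A ⊓ Submodule.span F {v} = ⊥ := by
    rw [eq_bot_iff]
    rintro x ⟨hxA, hxS⟩
    obtain ⟨r, rfl⟩ := Submodule.mem_span_singleton.mp hxS
    rcases eq_or_ne r 0 with rfl | hr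
    · simp
    · have hvA : v ∈ A := by
        have h' := A.smul_mem r⁻¹ hxA
        rwa [smul_smul, inv_mul_cancel₀ hr, one_smul] at h'
      exact absurd hvA hv
  have h1 := Submodule.finrank_sup_add_finrank_inf_eq A (Submodule.span F {v})
  rw [hA.1, finrank_span_singleton hv0, hinf, finrank_bot] at h1
  exact ⟨A ⊔ Submodule.span F {v}, goodCode_of_le hA le_sup_left (by omega), le_sup_left⟩

lemma not_isolated_of_le {n t k : ℕ} {X D : Submodule F (Fin n → F)}
    (hD : goodCode F n t (k-1) D) (hle : D ≤ X) : ¬ IsIsolated F n t k X :=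
  fun h => h D hle hD

/-- From a `Δ`-walk build reachability in `Λ̃`. -/
lemma reach_lambda_of_delta_walk {n t k : ℕ} :
    ∀ {dA dB : {C : Submodule F (Fin n → F) // goodCode F n t (k-1) C}},
      (deltaGraph F n t (k-1)).Walk dA dB →
      ∀ (X Y : ↥{X : {C : Submodule F (Fin n → F) // goodCode F n t k C} |
          ¬ IsIsolated F n t k X.1}),
        dA.1 ≤ X.1.1 → dB.1 ≤ Y.1.1 →
        ((lambdaGraph F n t k).induce
          {X : {C : Submodule F (Fin n → F) // goodCode F n t k C} |
            ¬ IsIsolated F n t k X.1}).Reachable X Y := by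
  intro dA dB w
  induction w with
  | @nil d =>
    intro X Y hX hY
    rcases lambda_eq_or_adj X.1 Y.1 d.2 hX hY with h | h
    · exact (Subtype.ext h : X = Y) ▸ SimpleGraph.Reachable.refl X
    · exact SimpleGraph.Adj.reachable (by exact h)
  | @cons d1 E d2 hAdj w ih =>
    intro X Y hX hY
    have hZgood : goodCode F n t k (d1.1 ⊔ E.1) := sup_good hAdj
    let Z : ↥{X : {C : Submodule F (Fin n → F) // goodCode F n t k C} |
        ¬ IsIsolated F n t k X.1} :=
      ⟨⟨d1.1 ⊔ E.1, hZgood⟩, not_isolated_of_le d1.2 le_sup_left⟩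
    have h1 : ((lambdaGraph F n t k).induce _).Reachable X Z := by
      rcases lambda_eq_or_adj X.1 Z.1 d1.2 hX le_sup_left with h | h
      · exact (Subtype.ext h : X = Z) ▸ SimpleGraph.Reachable.refl X
      · exact SimpleGraph.Adj.reachable (by exact h)
    exact h1.trans (ih Z Y le_sup_right hY)

/-- From a `Λ̃`-walk build reachability in `Δ`. -/
lemma reach_delta_of_lambda_walk {n t k : ℕ} :
    ∀ {X Y : ↥{X : {C : Submodule F (Fin n → F) // goodCode F n t k C} |
        ¬ IsIsolated F n t k X.1}},
      ((lambdaGraph F n t k).induce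
        {X : {C : Submodule F (Fin n → F) // goodCode F n t k C} |
          ¬ IsIsolated F n t k X.1}).Walk X Y →
      ∀ (dA dB : {C : Submodule F (Fin n → F) // goodCode F n t (k-1) C}),
        dA.1 ≤ X.1.1 → dB.1 ≤ Y.1.1 →
        (deltaGraph F n t (k-1)).Reachable dA dB := by
  intro X Y w
  induction w with
  | @nil U =>
    intro dA dB hA hB
    exact delta_reach_of_le U.1.2 dA dB hA hB
  | @cons U W V hAdj w ih =>
    intro dA dB hA hB
    have hAdj' : (lambdaGraph F n t k).Adj U.1 W.1 := hAdj
    have hDgood : goodCode F n t (k-1) (U.1.1 ⊓ W.1.1) := hAdj'.2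
    let D : {C : Submodule F (Fin n → F) // goodCode F n t (k-1) C} :=
      ⟨U.1.1 ⊓ W.1.1, hDgood⟩
    have h1 : (deltaGraph F n t (k-1)).Reachable dA D :=
      delta_reach_of_le U.1.2 dA D hA inf_le_left
    exact h1.trans (ih D dB inf_le_right hB)

end Aux

/-- `Δ_t(n,k-1)` is connected iff the induced subgraph `Λ̃_t(n,k)` of
`Λ_t(n,k)` on the non-isolated codes is connected (the empty graph being connected).
In particular `Λ_t(n,k)` is the disjoint union of `Λ̃_t(n,k)` and the isolated vertices:
isolated codes have no neighbours in `Λ_t(n,k)`. -/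
theorem delta_connected_iff_lambdaTilde_connected
    {n k t : ℕ} (hk : 0 < k) (hkn : k < n) (ht : t ≤ k) :
    ((deltaGraph F n t (k-1)).Preconnected ↔
      ((lambdaGraph F n t k).induce
        {X : {C : Submodule F (Fin n → F) // goodCode F n t k C} |
          ¬ IsIsolated F n t k X.1}).Preconnected) ∧
    (∀ X Y : {C : Submodule F (Fin n → F) // goodCode F n t k C},
      IsIsolated F n t k X.1 → ¬ (lambdaGraph F n t k).Adj X Y) := by
  constructor
  · constructor
    · intro hDelta X Y
      have hX := X.2
      have hY := Y.2
      simp only [Set.mem_setOf_eq, IsIsolated, not_forall, not_not] at hX hY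
      obtain ⟨DX, hDXle, hDXgood⟩ := hX
      obtain ⟨DY, hDYle, hDYgood⟩ := hY
      obtain ⟨w⟩ := hDelta ⟨DX, hDXgood⟩ ⟨DY, hDYgood⟩
      exact reach_lambda_of_delta_walk w X Y hDXle hDYle
    · intro hLambda dA dB
      obtain ⟨XA, hXAgood, hAle⟩ := exists_good_ext hk hkn dA.2
      obtain ⟨XB, hXBgood, hBle⟩ := exists_good_ext hk hkn dB.2
      obtain ⟨w⟩ := hLambda ⟨⟨XA, hXAgood⟩, not_isolated_of_le dA.2 hAle⟩
        ⟨⟨XB, hXBgood⟩, not_isolated_of_le dB.2 hBle⟩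
      exact reach_delta_of_lambda_walk w dA dB hAle hBle
  · rintro X Y hiso ⟨hne, hgood⟩
    exact hiso _ inf_le_left hgood
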